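/- Let H > 0 and ε > 0, and define Φ^ε(x) = (H/ε)·(tanh(H(1−x)/(2ε)) − 1). Then for every x ∈ [0,1], exp(−(1/2)·∫₀ˣ Φ^ε(s) ds) = (1 + exp(H(x−1)/ε))/(1 + exp(−H/ε)). -/

import Mathlib

/-- Closed form of the Cole–Hopf transform of the boundary residue
`Φ^ε(x) = (H/ε)(tanh(H(1−x)/(2ε)) − 1)`: for every `x ∈ [0,1]`,
`exp(−(1/2)∫₀ˣ Φ^ε) = (1 + e^{H(x−1)/ε})/(1 + e^{−H/ε})`. -/
theorem coleHopf_boundary_residue (H ε : ℝ) (hH : 0 < H) (hε : 0 < ε)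
    (Φ : ℝ → ℝ)
    (hΦ : ∀ x : ℝ, Φ x = (H / ε) * (Real.tanh (H * (1 - x) / (2 * ε)) - 1)) :
    ∀ x ∈ Set.Icc (0 : ℝ) 1,
      Real.exp (-(1 / 2) * ∫ s in (0 : ℝ)..x, Φ s)
        = (1 + Real.exp (H * (x - 1) / ε)) / (1 + Real.exp (-H / ε)) := by
  intro x hx
  set F : ℝ → ℝ := fun y => (-2) * Real.log (1 + Real.exp (H * (y - 1) / ε)) with hF
  have hderiv : ∀ s : ℝ, HasDerivAt F (Φ s) s := by
    intro s
    have hg : HasDerivAt (fun y : ℝ => H * (y - 1) / ε) (H / ε) s := by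
      simpa using (((hasDerivAt_id s).sub_const 1).const_mul H).div_const ε
    have hexp := hg.exp
    have hpos : 0 < 1 + Real.exp (H * (s - 1) / ε) := by positivity
    have hlog := ((hasDerivAt_const s (1:ℝ)).add hexp).log (ne_of_gt hpos)
    have h2 := hlog.const_mul (-2 : ℝ)
    refine h2.congr_deriv (Eq.symm ?_)
    simp only [Pi.add_apply]
    rw [hΦ]
    have hA : H * (s - 1) / ε = (-(H * (1 - s) / (2 * ε))) + (-(H * (1 - s) / (2 * ε))) := by
      field_simp; ring
    rw [hA, Real.exp_add, Real.exp_neg, Real.tanh_eq_sinh_div_cosh, Real.sinh_eq, Real.cosh_eq,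
      Real.exp_neg]
    set E := Real.exp (H * (1 - s) / (2 * ε)) with hE
    have hEpos : 0 < E := Real.exp_pos _
    have hd : (0:ℝ) < 1 + E⁻¹ * E⁻¹ := by positivity
    field_simp
    ring
  have hcont : Continuous Φ := by
    have : Φ = fun x => (H / ε) * (Real.tanh (H * (1 - x) / (2 * ε)) - 1) := funext hΦ
    rw [this]
    have ht : Continuous Real.tanh := by
      have : Real.tanh = fun x => Real.sinh x / Real.cosh x :=
        funext fun x => Real.tanh_eq_sinh_div_cosh x
      rw [this]
      exact Real.continuous_sinh.div Real.continuous_cosh fun x => (Real.cosh_pos x).ne'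
    exact continuous_const.mul ((ht.comp (by fun_prop)).sub continuous_const)
  have hint : ∫ s in (0 : ℝ)..x, Φ s = F x - F 0 :=
    intervalIntegral.integral_eq_sub_of_hasDerivAt (fun s _ => hderiv s)
      (hcont.intervalIntegrable 0 x)
  rw [hint, hF]
  have hpx : (0:ℝ) < 1 + Real.exp (H * (x - 1) / ε) := by positivity
  have hp0 : (0:ℝ) < 1 + Real.exp (H * ((0:ℝ) - 1) / ε) := by positivity
  have : -(1 / 2) * ((-2) * Real.log (1 + Real.exp (H * (x - 1) / ε)) -
      (-2) * Real.log (1 + Real.exp (H * ((0:ℝ) - 1) / ε)))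
      = Real.log (1 + Real.exp (H * (x - 1) / ε)) -
        Real.log (1 + Real.exp (H * ((0:ℝ) - 1) / ε)) := by ring
  rw [this, Real.exp_sub, Real.exp_log hpx, Real.exp_log hp0]
  norm_num
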